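/- For odd n and j = (n+1)/2, the restricted Eulerian polynomial satisfies A_{n,(n+1)/2}(t) = Σ_{k=1}^{(n-1)/2} (t·A_{n-1,k}(t) + A_{n-1,n-k}(t)). -/

import Mathlib

open scoped Classical

/-- The number of descents of a permutation of `Fin n` (positions are 0-based:
`i` is a descent if `w i > w (i+1)`). -/
def des {n : ℕ} (w : Equiv.Perm (Fin n)) : ℕ :=
  (Finset.univ.filter fun i : Fin n => ∃ h : (i : ℕ) + 1 < n, w ⟨(i : ℕ) + 1, h⟩ < w i).card

/-- `A n i j` = number of permutations `w` of `{1,…,n}` with `w(1) = j` (1-based)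
and exactly `i` descents. -/
def A (n i j : ℕ) : ℕ :=
  (Finset.univ.filter fun w : Equiv.Perm (Fin n) =>
    (∀ x : Fin n, (x : ℕ) = 0 → (w x : ℕ) + 1 = j) ∧ des w = i).card

/-- The Eulerian number: permutations of `{1,…,n}` with exactly `i` descents. -/
def Eul (n i : ℕ) : ℕ :=
  (Finset.univ.filter fun w : Equiv.Perm (Fin n) => des w = i).card

open Polynomial

/-- Restricted Eulerian polynomial `A_{n,j}(t) = Σ_{w(1)=j} t^{d(w)}`. -/
noncomputable def Apoly (n j : ℕ) : Polynomial ℤ :=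
  ∑ w ∈ (Finset.univ.filter fun w : Equiv.Perm (Fin n) =>
      ∀ x : Fin n, (x : ℕ) = 0 → (w x : ℕ) + 1 = j), X ^ des w

/-- Symmetric restricted Eulerian polynomial
`Â_{n,j}(t) = Σ_{w(1) ∈ {j, n+1-j}} t^{d(w)}`. -/
noncomputable def AhatPoly (n j : ℕ) : Polynomial ℤ :=
  ∑ w ∈ (Finset.univ.filter fun w : Equiv.Perm (Fin n) =>
      ∀ x : Fin n, (x : ℕ) = 0 → ((w x : ℕ) + 1 = j ∨ (w x : ℕ) + 1 = n + 1 - j)),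
    X ^ des w

/-- `Â'_{n,j}(t) = t·A_{n,j}(t) + A_{n,n+1-j}(t)`. -/
noncomputable def AhatPoly' (n j : ℕ) : Polynomial ℤ :=
  X * Apoly n j + Apoly n (n + 1 - j)

/-! ### Auxiliary development -/

/-- Extend a permutation `u` of `Fin m` to a permutation of `Fin (m+1)` whose value
at `0` is `p` and whose subsequent values are the values of `u` relabelled by
`p.succAbove` (an order-preserving relabelling onto `Fin (m+1) \ {p}`). -/
noncomputable def extPerm {m : ℕ} (p : Fin (m + 1)) (u : Equiv.Perm (Fin m)) :
    Equiv.Perm (Fin (m + 1)) :=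
  Equiv.ofBijective (Fin.cons p (fun i => p.succAbove (u i)))
    ((Finite.injective_iff_bijective).1 (by
      intro x y hxy
      induction x using Fin.cases with
      | zero =>
        induction y using Fin.cases with
        | zero => rfl
        | succ j => simp at hxy
      | succ i =>
        induction y using Fin.cases with
        | zero => simp at hxy
        | succ j =>
          simp at hxy
          exact congrArg Fin.succ hxy))

@[simp] lemma extPerm_zero {m : ℕ} (p : Fin (m + 1)) (u : Equiv.Perm (Fin m)) :
    extPerm p u 0 = p := by simp [extPerm]

@[simp] lemma extPerm_succ {m : ℕ} (p : Fin (m + 1)) (u : Equiv.Perm (Fin m)) (i : Fin m) :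
    extPerm p u i.succ = p.succAbove (u i) := by simp [extPerm]

/-- Restriction: the inverse of `extPerm` (junk value if `w 0 ≠ p`). -/
noncomputable def resPerm {m : ℕ} (p : Fin (m + 1)) (w : Equiv.Perm (Fin (m + 1))) :
    Equiv.Perm (Fin m) :=
  if h : w 0 = p then
    Equiv.ofBijective
      (fun i => (finSuccAboveEquiv p).symm
        ⟨w i.succ, fun e => Fin.succ_ne_zero i (w.injective (by rw [e, ← h]))⟩)
      ((Finite.injective_iff_bijective).1 (by
        intro x y hxy
        have := congrArg (finSuccAboveEquiv p) hxy
        simp only [Equiv.apply_symm_apply, Subtype.mk.injEq] at this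
        exact Fin.succ_injective _ (w.injective this)))
  else 1

lemma resPerm_spec {m : ℕ} (p : Fin (m + 1)) (w : Equiv.Perm (Fin (m + 1)))
    (h : w 0 = p) (i : Fin m) : p.succAbove (resPerm p w i) = w i.succ := by
  rw [resPerm, dif_pos h]
  have h2 := (finSuccAboveEquiv p).apply_symm_apply
    ⟨w i.succ, fun e => Fin.succ_ne_zero i (w.injective (by rw [e, ← h]))⟩
  rw [finSuccAboveEquiv_apply] at h2
  exact congrArg Subtype.val h2

lemma extPerm_resPerm {m : ℕ} (p : Fin (m + 1)) (w : Equiv.Perm (Fin (m + 1)))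
    (h : w 0 = p) : extPerm p (resPerm p w) = w := by
  apply Equiv.ext
  intro x
  induction x using Fin.cases with
  | zero => rw [extPerm_zero, h]
  | succ i => rw [extPerm_succ, resPerm_spec p w h]

lemma resPerm_extPerm {m : ℕ} (p : Fin (m + 1)) (u : Equiv.Perm (Fin m)) :
    resPerm p (extPerm p u) = u := by
  apply Equiv.ext
  intro i
  apply Fin.succAbove_right_injective (p := p)
  rw [resPerm_spec p _ (extPerm_zero p u) i, extPerm_succ]

lemma des_eq_sum {n : ℕ} (w : Equiv.Perm (Fin n)) :
    des w = ∑ i : Fin n,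
      if ∃ h : (i : ℕ) + 1 < n, w ⟨(i : ℕ) + 1, h⟩ < w i then 1 else 0 := by
  rw [des, Finset.card_filter]

lemma des_cons {m : ℕ} (p : Fin (m + 2)) (u : Equiv.Perm (Fin (m + 1)))
    (w : Equiv.Perm (Fin (m + 2))) (h0 : w 0 = p)
    (hs : ∀ i : Fin (m + 1), w i.succ = p.succAbove (u i)) :
    des w = (if (u 0 : ℕ) < (p : ℕ) then 1 else 0) + des u := by
  rw [des_eq_sum, des_eq_sum, Fin.sum_univ_succ]
  congr 1
  · congr 1
    simp only [eq_iff_iff]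
    constructor
    · rintro ⟨h, hlt⟩
      have h1 : (⟨(0 : Fin (m+2)).val + 1, h⟩ : Fin (m+2)) = (0 : Fin (m+1)).succ := by
        ext; simp
      rw [h1, hs, h0] at hlt
      rw [Fin.succAbove_lt_iff_castSucc_lt] at hlt
      exact hlt
    · intro hlt
      refine ⟨Nat.succ_lt_succ (Nat.succ_pos m), ?_⟩
      have h1 : (⟨(0 : Fin (m+2)).val + 1, Nat.succ_lt_succ (Nat.succ_pos m)⟩ : Fin (m+2))
          = (0 : Fin (m+1)).succ := by ext; simp
      rw [h1, hs, h0, Fin.succAbove_lt_iff_castSucc_lt]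
      exact hlt
  · apply Finset.sum_congr rfl
    intro i _
    congr 1
    simp only [eq_iff_iff]
    constructor
    · rintro ⟨h, hlt⟩
      have hi : (i : ℕ) + 1 < m + 1 := by
        have := h; simp [Fin.val_succ] at this; omega
      refine ⟨hi, ?_⟩
      have h1 : (⟨(i.succ : ℕ) + 1, h⟩ : Fin (m+2)) = (⟨(i : ℕ) + 1, hi⟩ : Fin (m+1)).succ := by
        ext; simp
      rw [h1, hs, hs] at hlt
      exact Fin.succAbove_lt_succAbove_iff.mp hlt
    · rintro ⟨h, hlt⟩
      refine ⟨by simp [Fin.val_succ]; omega, ?_⟩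
      have h1 : (⟨(i.succ : ℕ) + 1, by simp [Fin.val_succ]; omega⟩ : Fin (m+2))
          = (⟨(i : ℕ) + 1, h⟩ : Fin (m+1)).succ := by ext; simp
      rw [h1, hs, hs]
      exact Fin.succAbove_lt_succAbove_iff.mpr hlt

lemma Apoly_filter_eq {n j : ℕ} (hn : 0 < n) :
    (Finset.univ.filter fun w : Equiv.Perm (Fin n) =>
      ∀ x : Fin n, (x : ℕ) = 0 → (w x : ℕ) + 1 = j)
    = Finset.univ.filter fun w : Equiv.Perm (Fin n) => (w ⟨0, hn⟩ : ℕ) + 1 = j := by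
  apply Finset.filter_congr
  intro w _
  constructor
  · intro h; exact h ⟨0, hn⟩ rfl
  · intro h x hx
    have hxz : x = ⟨0, hn⟩ := Fin.ext hx
    rw [hxz]; exact h

lemma Apoly_rec (m : ℕ) (p : Fin (m + 2)) :
    Apoly (m + 2) ((p : ℕ) + 1)
      = ∑ k ∈ Finset.range (m + 1),
          (if k < (p : ℕ) then X else 1) * Apoly (m + 1) (k + 1) := by
  have hz : (⟨0, Nat.succ_pos (m+1)⟩ : Fin (m+2)) = 0 := rfl
  have step1 : Apoly (m + 2) ((p : ℕ) + 1)
      = ∑ u : Equiv.Perm (Fin (m + 1)),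
          (if (u 0 : ℕ) < (p : ℕ) then (X : Polynomial ℤ) else 1) * X ^ des u := by
    rw [Apoly, Apoly_filter_eq (Nat.succ_pos (m+1))]
    refine Finset.sum_nbij' (i := fun w => resPerm p w) (j := fun u => extPerm p u)
      ?_ ?_ ?_ ?_ ?_
    · intro w _; exact Finset.mem_univ _
    · intro u _
      simp only [Finset.mem_filter, Finset.mem_univ, true_and, hz, extPerm_zero]
    · intro w hw
      simp only [Finset.mem_filter, hz] at hw
      have h0 : w 0 = p := Fin.ext (Nat.succ_injective hw.2)
      exact extPerm_resPerm p w h0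
    · intro u _; exact resPerm_extPerm p u
    · intro w hw
      simp only [Finset.mem_filter, hz] at hw
      have h0 : w 0 = p := Fin.ext (Nat.succ_injective hw.2)
      rw [des_cons p (resPerm p w) w h0 (fun i => (resPerm_spec p w h0 i).symm)]
      rw [pow_add]
      congr 1
      split <;> simp
  rw [step1]
  rw [← Finset.sum_fiberwise_of_maps_to (g := fun u : Equiv.Perm (Fin (m+1)) => (u 0 : ℕ))
    (t := Finset.range (m+1)) (fun u _ => Finset.mem_range.mpr (u 0).isLt)]
  apply Finset.sum_congr rfl
  intro k hk
  have hfil : (Finset.univ.filter fun u : Equiv.Perm (Fin (m+1)) => (u 0 : ℕ) = k)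
      = Finset.univ.filter fun u : Equiv.Perm (Fin (m+1)) =>
          ∀ x : Fin (m+1), (x : ℕ) = 0 → (u x : ℕ) + 1 = k + 1 := by
    apply Finset.filter_congr
    intro u _
    constructor
    · intro h x hx
      have hxz : x = 0 := Fin.ext hx
      rw [hxz, h]
    · intro h
      exact Nat.succ_injective (h 0 rfl)
  calc (Finset.univ.filter fun u : Equiv.Perm (Fin (m+1)) => (u 0 : ℕ) = k).sum
        (fun u => (if (u 0 : ℕ) < (p : ℕ) then (X : Polynomial ℤ) else 1) * X ^ des u)
      = (Finset.univ.filter fun u : Equiv.Perm (Fin (m+1)) => (u 0 : ℕ) = k).sum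
        (fun u => (if k < (p : ℕ) then (X : Polynomial ℤ) else 1) * X ^ des u) := by
        apply Finset.sum_congr rfl
        intro u hu
        simp only [Finset.mem_filter] at hu
        rw [hu.2]
    _ = (if k < (p : ℕ) then (X : Polynomial ℤ) else 1) * Apoly (m+1) (k+1) := by
        rw [← Finset.mul_sum, Apoly, hfil]

lemma sum_arith (B : ℕ → Polynomial ℤ) (a : ℕ) :
    ∑ k ∈ Finset.range (a + a), (if k < a then (X : Polynomial ℤ) else 1) * B (k + 1)
      = ∑ k ∈ Finset.Icc 1 a, (X * B k + B (a + a + 1 - k)) := by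
  rw [Finset.sum_add_distrib, Finset.range_eq_Ico,
    ← Finset.sum_Ico_consecutive _ (Nat.zero_le a) (Nat.le_add_left a a)]
  congr 1
  · refine Finset.sum_nbij' (i := fun k => k + 1) (j := fun k => k - 1) ?_ ?_ ?_ ?_ ?_
    · intro k hk; simp only [Finset.mem_Ico] at hk; simp only [Finset.mem_Icc]; omega
    · intro k hk; simp only [Finset.mem_Icc] at hk; simp only [Finset.mem_Ico]; omega
    · intro k hk; omega
    · intro k hk; simp only [Finset.mem_Icc] at hk; omega
    · intro k hk; simp only [Finset.mem_Ico] at hk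
      rw [if_pos hk.2]
  · refine Finset.sum_nbij' (i := fun k => a + a - k) (j := fun k => a + a - k) ?_ ?_ ?_ ?_ ?_
    · intro k hk; simp only [Finset.mem_Ico] at hk; simp only [Finset.mem_Icc]; omega
    · intro k hk; simp only [Finset.mem_Icc] at hk; simp only [Finset.mem_Ico]; omega
    · intro k hk; simp only [Finset.mem_Ico] at hk; omega
    · intro k hk; simp only [Finset.mem_Icc] at hk; omega
    · intro k hk; simp only [Finset.mem_Ico] at hk
      rw [if_neg (by omega), one_mul]
      congr 1
      omega

theorem stmt7 (n : ℕ) (hn : 3 ≤ n) (hodd : Odd n) :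
    Apoly n ((n + 1) / 2) =
      ∑ k ∈ Finset.Icc 1 ((n - 1) / 2), (X * Apoly (n - 1) k + Apoly (n - 1) (n - k)) := by
  obtain ⟨a, ha⟩ := hodd
  have ha1 : 1 ≤ a := by omega
  obtain ⟨m, hm⟩ : ∃ m, n = m + 2 := ⟨n - 2, by omega⟩
  set p : Fin (m + 2) := ⟨a, by omega⟩ with hp
  have hpv : (p : ℕ) = a := rfl
  rw [hm]
  rw [show (m + 2 + 1) / 2 = (p : ℕ) + 1 by rw [hpv]; omega]
  rw [Apoly_rec m p, hpv]
  rw [show m + 1 = a + a by omega]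
  rw [show m + 2 = a + a + 1 by omega]
  rw [Nat.add_sub_cancel]
  rw [show (a + a) / 2 = a by omega]
  exact sum_arith (Apoly (a + a)) a
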